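/- There is no measurable function a: 𝕋 → ℂ with |a(ω)| = 1 a.e. satisfying −h(ω) = a(2ω) h(ω) ā(ω) a.e., where h(ω) = (1/√2)(1 + e^{−2πiω}) is the Haar low-pass filter; hence the filter −h is not equivalent to the Haar filter h. -/

import Mathlib

open MeasureTheory Real

/-- The Haar low-pass filter `h(ω) = (1/√2)(1 + e^{-2πiω})`, as a 1-periodic function
on `ℝ` (identifying `𝕋 = ℝ/ℤ` with 1-periodic functions). -/
noncomputable def haarFilter (x : ℝ) : ℂ :=
  (1 / (Real.sqrt 2 : ℂ)) * (1 + Complex.exp (-2 * Real.pi * Complex.I * (x : ℂ)))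

/-- The Haar filter vanishes only on a countable set. -/
lemma haarFilter_ae_ne_zero : ∀ᵐ x : ℝ, haarFilter x ≠ 0 := by
  have hsub : {x : ℝ | haarFilter x = 0} ⊆ Set.range (fun n : ℤ => (-(n : ℝ) - 1/2 : ℝ)) := by
    intro x hx
    simp only [Set.mem_setOf_eq, haarFilter] at hx
    have hs2 : (Real.sqrt 2 : ℂ) ≠ 0 := by
      simp [Complex.ofReal_ne_zero, Real.sqrt_ne_zero']
    have h2 : Complex.exp (-2 * Real.pi * Complex.I * x) = -1 := by
      rcases mul_eq_zero.mp hx with h | h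
      · exact absurd h (by simp [hs2])
      · linear_combination h
    have h3 : Complex.exp (-2 * Real.pi * Complex.I * x - Real.pi * Complex.I) = 1 := by
      rw [Complex.exp_sub, h2, Complex.exp_pi_mul_I]
      norm_num
    rw [Complex.exp_eq_one_iff] at h3
    obtain ⟨n, hn⟩ := h3
    refine ⟨n, ?_⟩
    have hπI : (Real.pi : ℂ) * Complex.I ≠ 0 := by
      simp [Complex.ofReal_ne_zero, Real.pi_ne_zero, Complex.I_ne_zero]
    have h4 : ((Real.pi : ℂ) * Complex.I) * ((-(n:ℂ) - 1/2) * 2) =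
        ((Real.pi : ℂ) * Complex.I) * ((x : ℂ) * 2) := by
      linear_combination hn
    have h5 : ((-(n:ℂ) - 1/2) : ℂ) = (x : ℂ) := by
      have h6 := mul_left_cancel₀ hπI h4
      linear_combination h6 / 2
    show (-(n:ℝ) - 1/2 : ℝ) = x
    have h9 := congrArg Complex.re h5
    simpa using h9
  have hnull : (volume : Measure ℝ) {x : ℝ | haarFilter x = 0} = 0 :=
    measure_mono_null hsub ((Set.countable_range _).measure_zero _)
  rw [ae_iff]
  simpa using hnull

/-- there is no measurable unimodular function `a` on `𝕋` with
`-h(ω) = a(2ω) h(ω) conj(a(ω))` a.e., where `h` is the Haar low-pass filter; hence the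
filter `-h` is not equivalent to the Haar filter `h`. -/
theorem stmt14 :
    ¬ ∃ a : ℝ → ℂ, Measurable a ∧ Function.Periodic a 1 ∧
      (∀ᵐ x : ℝ, ‖a x‖ = 1) ∧
      (∀ᵐ x : ℝ, -haarFilter x = a (2 * x) * haarFilter x * (starRingEnd ℂ) (a x)) := by
  rintro ⟨a, ham, hper, hnorm, heq⟩
  -- Step 1: a (2x) = - a x a.e.
  have h3 : ∀ᵐ x : ℝ, a (2 * x) = - a x := by
    filter_upwards [hnorm, heq, haarFilter_ae_ne_zero] with x h1 h2 h0
    have hc : a x * (starRingEnd ℂ) (a x) = 1 := by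
      rw [Complex.mul_conj]
      norm_cast
      rw [Complex.normSq_eq_norm_sq, h1]
      norm_num
    have h4 : a (2 * x) * haarFilter x = (- a x) * haarFilter x := by
      calc a (2 * x) * haarFilter x
          = a (2 * x) * haarFilter x * (a x * (starRingEnd ℂ) (a x)) := by rw [hc, mul_one]
        _ = (a (2 * x) * haarFilter x * (starRingEnd ℂ) (a x)) * a x := by ring
        _ = (- haarFilter x) * a x := by rw [← h2]
        _ = (- a x) * haarFilter x := by ring
    exact mul_right_cancel₀ h0 h4
  -- Step 2: descend to the circle
  set μ : Measure (AddCircle (1 : ℝ)) := volume with hμdef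
  set g : AddCircle (1 : ℝ) → ℂ := hper.lift with hgdef
  have hgmk : ∀ x : ℝ, g ↑x = a x := fun x => hper.lift_coe x
  have hg : Measurable g := by
    have hgeq : g = a ∘ (fun y : AddCircle (1 : ℝ) =>
        ((AddCircle.measurableEquivIoc 1 0 y : Set.Ioc (0:ℝ) (0+1)) : ℝ)) := by
      funext y
      induction y using QuotientAddGroup.induction_on with | H b =>
      have hrep : ((AddCircle.measurableEquivIoc 1 0 (↑b : AddCircle (1:ℝ)) :
          Set.Ioc (0:ℝ) (0+1)) : ℝ) = toIocMod (one_pos) 0 b := by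
        simp [AddCircle.measurableEquivIoc, AddCircle.equivIoc,
          QuotientAddGroup.equivIocMod]
      simp only [Function.comp_apply]
      rw [hgmk, hrep, ← self_sub_toIocDiv_zsmul, hper.sub_zsmul_eq]
    rw [hgeq]
    exact ham.comp (measurable_subtype_coe.comp (AddCircle.measurableEquivIoc 1 0).measurable)
  -- transfer principle
  have key : ∀ (Q : AddCircle (1:ℝ) → Prop), MeasurableSet {y | Q y} →
      (∀ᵐ x : ℝ, Q ↑x) → ∀ᵐ y ∂μ, Q y := by
    intro Q hQ hae
    have MP := AddCircle.measurePreserving_mk 1 0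
    rw [hμdef, ← MP.map_eq, MeasureTheory.ae_map_iff AddCircle.measurable_mk'.aemeasurable hQ]
    exact ae_restrict_of_ae hae
  have hcoe2 : ∀ x : ℝ, ((2 * x : ℝ) : AddCircle (1:ℝ)) = 2 • ((x : ℝ) : AddCircle (1:ℝ)) := by
    intro x
    have h7 : ((2 * x : ℝ) : AddCircle (1:ℝ)) =
        ((x : ℝ) : AddCircle (1:ℝ)) + ((x : ℝ) : AddCircle (1:ℝ)) := by
      rw [two_mul]; rfl
    rw [h7, two_smul]
  have hA : ∀ᵐ y ∂μ, ‖g y‖ = 1 := by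
    refine key _ ((hg.norm) (measurableSet_singleton 1)) ?_
    filter_upwards [hnorm] with x hx
    rwa [hgmk]
  have hmul2 : Measurable (fun y : AddCircle (1:ℝ) => 2 • y) := by
    have h8 : (fun y : AddCircle (1:ℝ) => 2 • y) = fun y => y + y := by
      funext y; rw [two_smul]
    rw [h8]; exact measurable_id.add measurable_id
  have hB : ∀ᵐ y ∂μ, g (2 • y) = - g y := by
    refine key _ (measurableSet_eq_fun (hg.comp hmul2) hg.neg) ?_
    filter_upwards [h3] with x hx
    rw [← hcoe2, hgmk, hgmk, hx]
  -- Step 3: g^2 is invariant under doubling, hence a.e. constant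
  have erg2 : Ergodic (fun y : AddCircle (1:ℝ) => 2 • y) :=
    AddCircle.ergodic_nsmul (by norm_num)
  have hsq : (fun y => (g y)^2) ∘ (fun y : AddCircle (1:ℝ) => 2 • y) =ᵐ[μ]
      (fun y => (g y)^2) := by
    filter_upwards [hB] with y hy
    simp only [Function.comp_apply, hy, neg_sq]
  obtain ⟨c, hc⟩ := erg2.ae_eq_const_of_ae_eq_comp₀
    ((hg.pow_const 2).nullMeasurable) hsq
  -- μ is a probability measure
  have hμuniv : μ Set.univ = 1 := by
    rw [hμdef]
    simp [AddCircle.measure_univ (T := (1:ℝ))]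
  have : IsProbabilityMeasure μ := ⟨hμuniv⟩
  -- c ≠ 0
  have hc0 : c ≠ 0 := by
    obtain ⟨y, hy1, hy2⟩ := (hA.and hc).exists
    intro h
    rw [h] at hy2
    simp only [Function.const_apply] at hy2
    have := congrArg norm hy2
    rw [norm_pow, hy1] at this
    norm_num at this
  obtain ⟨s, hs⟩ := IsAlgClosed.exists_pow_nat_eq c (n := 2) two_pos
  have hs0 : s ≠ 0 := by rintro rfl; exact hc0 (by simpa using hs.symm)
  -- the set E where g = s
  set E : Set (AddCircle (1:ℝ)) := {y | g y = s} with hEdef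
  have hEm : MeasurableSet E := measurableSet_eq_fun hg measurable_const
  have hval : ∀ᵐ y ∂μ, g y = s ∨ g y = -s := by
    filter_upwards [hc] with y hy
    have hfac : (g y - s) * (g y + s) = 0 := by
      have : g y ^ 2 = s ^ 2 := by rw [hs]; exact hy
      linear_combination this
    rcases mul_eq_zero.mp hfac with h | h
    · exact Or.inl (sub_eq_zero.mp h)
    · exact Or.inr (eq_neg_of_add_eq_zero_left h)
  have hTE : (fun y : AddCircle (1:ℝ) => 2 • y) ⁻¹' E =ᵐ[μ] (Eᶜ : Set (AddCircle (1:ℝ))) := by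
    rw [Filter.eventuallyEq_set]
    filter_upwards [hB, hval] with y h1 h2
    simp only [Set.mem_preimage, Set.mem_compl_iff, hEdef, Set.mem_setOf_eq]
    constructor
    · intro h h'
      rw [h1, h'] at h
      exact hs0 (by linear_combination - h / 2)
    · intro h
      rcases h2 with h2 | h2
      · exact absurd h2 h
      · rw [h1, h2, neg_neg]
  -- μ E = μ Eᶜ
  have hμE : μ E = μ Eᶜ := by
    rw [← measure_congr hTE]
    exact (erg2.toMeasurePreserving.measure_preimage hEm.nullMeasurableSet).symm
  have hsum : μ E + μ E = 1 := by
    nth_rewrite 2 [hμE]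
    rw [measure_add_measure_compl hEm, hμuniv]
  -- E is a.e. invariant under quadrupling
  have q := erg2.toMeasurePreserving.quasiMeasurePreserving
  have hpre2 : (fun y : AddCircle (1:ℝ) => 2 • y) ⁻¹'
      ((fun y : AddCircle (1:ℝ) => 2 • y) ⁻¹' E)
      =ᵐ[μ] ((fun y : AddCircle (1:ℝ) => 2 • y) ⁻¹' E)ᶜ := by
    have h1 := q.preimage_ae_eq hTE
    rwa [Set.preimage_compl] at h1
  have hcomplE : (((fun y : AddCircle (1:ℝ) => 2 • y) ⁻¹' E)ᶜ : Set (AddCircle (1:ℝ))) =ᵐ[μ] E := by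
    rw [Filter.eventuallyEq_set] at hTE ⊢
    filter_upwards [hTE] with y hy
    constructor
    · intro h'
      by_contra hne
      exact h' (hy.mpr hne)
    · intro hEy h'
      exact (hy.mp h') hEy
  have hcomp : (fun y : AddCircle (1:ℝ) => 4 • y) ⁻¹' E =
      (fun y : AddCircle (1:ℝ) => 2 • y) ⁻¹' ((fun y : AddCircle (1:ℝ) => 2 • y) ⁻¹' E) := by
    ext y
    simp [Set.mem_preimage, smul_smul]
  have hT4 : (fun y : AddCircle (1:ℝ) => 4 • y) ⁻¹' E =ᵐ[μ] E := by
    rw [hcomp]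
    exact hpre2.trans hcomplE
  have erg4 : Ergodic (fun y : AddCircle (1:ℝ) => 4 • y) :=
    AddCircle.ergodic_nsmul (by norm_num)
  rcases erg4.quasiErgodic.ae_empty_or_univ₀ hEm.nullMeasurableSet hT4 with h | h
  · have h0 : μ E = 0 := by
      rw [measure_congr h]
      exact measure_empty
    rw [h0] at hsum
    simp at hsum
  · have h1 : μ E = 1 := by
      rw [measure_congr h]
      exact hμuniv
    rw [h1] at hsum
    norm_num at hsum
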